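/- Let u ∈ 𝒞 be a real number of continued fraction type, and let a, b, c, d ∈ ℚ with ad - bc ≠ 0 and cu + d ≠ 0. Then (au + b)/(cu + d) ∈ 𝒞. -/

import Mathlib

/-- Numerators of the generalized continued fraction with partial
quotients `a` and partial numerators `b`:
`p₀ = a 0`, `p₁ = a 1 * a 0 + b 0`, `pₙ = a n * pₙ₋₁ + b (n-1) * pₙ₋₂`. -/
def cfP (a b : ℕ → ℚ) : ℕ → ℚ
  | 0 => a 0
  | 1 => a 1 * a 0 + b 0
  | n + 2 => a (n + 2) * cfP a b (n + 1) + b (n + 1) * cfP a b n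

/-- Denominators of the generalized continued fraction:
`q₀ = 1`, `q₁ = a 1`, `qₙ = a n * qₙ₋₁ + b (n-1) * qₙ₋₂`. -/
def cfQ (a b : ℕ → ℚ) : ℕ → ℚ
  | 0 => 1
  | 1 => a 1
  | n + 2 => a (n + 2) * cfQ a b (n + 1) + b (n + 1) * cfQ a b n

/-- The generalized continued fraction `a(0) + b(0)/(a(1) + b(1)/(a(2) + ⋯))`
converges to the real number `u`. -/
def CFConvergesTo (a b : ℕ → ℚ) (u : ℝ) : Prop :=
  (∀ n, b n ≠ 0) ∧ (∃ N, ∀ n ≥ N, cfQ a b n ≠ 0) ∧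
  Filter.Tendsto (fun n : ℕ => ((cfP a b n : ℝ) / (cfQ a b n : ℝ)))
    Filter.atTop (nhds u)

/-- The continued fraction has coefficients given by polynomials for all
sufficiently large indices. -/
def CFPolyType (a b : ℕ → ℚ) : Prop :=
  ∃ (A B : Polynomial ℚ) (N : ℕ), ∀ n ≥ N,
    a n = A.eval (n : ℚ) ∧ b n = B.eval (n : ℚ)

/-- A real number is of continued fraction type (belongs to `𝒞`) if some
generalized continued fraction of polynomial type converges to it. -/
def CFType (u : ℝ) : Prop :=
  ∃ a b : ℕ → ℚ, CFPolyType a b ∧ CFConvergesTo a b u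

private lemma twoStep {P : ℕ → Prop} (h0 : P 0) (h1 : P 1)
    (h : ∀ n, P n → P (n + 1) → P (n + 2)) : ∀ n, P n := by
  have key : ∀ n, P n ∧ P (n + 1) := by
    intro n
    induction n with
    | zero => exact ⟨h0, h1⟩
    | succ k ih => exact ⟨ih.2, h k ih.1 ih.2⟩
  exact fun n => (key n).1

private lemma CFType.add_rat {u : ℝ} (hu : CFType u) (r : ℚ) : CFType (u + r) := by
  obtain ⟨a, b, ⟨A, B, N, hAB⟩, hb, ⟨M, hM⟩, htend⟩ := hu
  set a' : ℕ → ℚ := fun n => if n = 0 then a 0 + r else a n with ha'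
  have hP : ∀ n, cfP a' b n = cfP a b n + r * cfQ a b n := by
    apply twoStep
    · simp [cfP, cfQ, a']
    · simp [cfP, cfQ, a']; ring
    · intro n ih1 ih2
      simp only [cfP, cfQ, ih1, ih2]
      simp only [ha', Nat.succ_ne_zero, if_false]
      ring
  have hQ : ∀ n, cfQ a' b n = cfQ a b n := by
    apply twoStep
    · simp [cfQ]
    · simp [cfQ, a']
    · intro n ih1 ih2
      simp only [cfQ, ih1, ih2]
      simp only [ha', Nat.succ_ne_zero, if_false]
  refine ⟨a', b, ⟨A, B, N + 1, fun n hn => ?_⟩, hb, ⟨M, fun n hn => by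
      rw [hQ]; exact hM n hn⟩, ?_⟩
  · have hn' : n ≥ N := le_trans (Nat.le_succ N) hn
    have : n ≠ 0 := by omega
    simpa [ha', this] using hAB n hn'
  · have heq : ∀ᶠ n in Filter.atTop,
        ((cfP a b n : ℝ) / (cfQ a b n : ℝ) + (r : ℝ)) =
        ((cfP a' b n : ℝ) / (cfQ a' b n : ℝ)) := by
      filter_upwards [Filter.eventually_atTop.2 ⟨M, hM⟩] with n hq
      have hq' : ((cfQ a b n : ℝ)) ≠ 0 := by exact_mod_cast hq
      rw [hP, hQ]
      push_cast
      field_simp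
    exact (htend.add_const (r : ℝ)).congr' heq

private lemma CFType.mul_rat {u : ℝ} (hu : CFType u) (r : ℚ) (hr : r ≠ 0) :
    CFType ((r : ℝ) * u) := by
  obtain ⟨a, b, ⟨A, B, N, hAB⟩, hb, ⟨M, hM⟩, htend⟩ := hu
  set a' : ℕ → ℚ := fun n => if n = 0 then r * a 0 else a n with ha'
  set b' : ℕ → ℚ := fun n => if n = 0 then r * b 0 else b n with hb'
  have hP : ∀ n, cfP a' b' n = r * cfP a b n := by
    apply twoStep
    · simp [cfP, a']
    · simp [cfP, a', b']; ring
    · intro n ih1 ih2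
      simp only [cfP, ih1, ih2]
      simp only [ha', hb', Nat.succ_ne_zero, if_false]
      ring
  have hQ : ∀ n, cfQ a' b' n = cfQ a b n := by
    apply twoStep
    · simp [cfQ]
    · simp [cfQ, a']
    · intro n ih1 ih2
      simp only [cfQ, ih1, ih2]
      simp only [ha', hb', Nat.succ_ne_zero, if_false]
  refine ⟨a', b', ⟨A, B, N + 1, fun n hn => ?_⟩, fun n => ?_, ⟨M, fun n hn => by
      rw [hQ]; exact hM n hn⟩, ?_⟩
  · have hn' : n ≥ N := le_trans (Nat.le_succ N) hn
    have : n ≠ 0 := by omega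
    simpa [ha', hb', this] using hAB n hn'
  · by_cases h : n = 0
    · simp [hb', h]; exact ⟨hr, hb 0⟩
    · simpa [hb', h] using hb n
  · have heq : ∀ n : ℕ,
        ((r : ℝ) * ((cfP a b n : ℝ) / (cfQ a b n : ℝ))) =
        ((cfP a' b' n : ℝ) / (cfQ a' b' n : ℝ)) := by
      intro n
      rw [hP, hQ]
      push_cast
      rw [mul_div_assoc]
    exact (htend.const_mul (r : ℝ)).congr heq

private lemma CFType.inv {u : ℝ} (hu : CFType u) (h0 : u ≠ 0) : CFType u⁻¹ := by
  obtain ⟨a, b, ⟨A, B, N, hAB⟩, hb, ⟨M, hM⟩, htend⟩ := hu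
  set a' : ℕ → ℚ := fun n => match n with | 0 => 0 | n + 1 => a n with ha'
  set b' : ℕ → ℚ := fun n => match n with | 0 => 1 | n + 1 => b n with hb'
  have key : ∀ n, cfP a' b' (n + 1) = cfQ a b n ∧ cfQ a' b' (n + 1) = cfP a b n := by
    apply twoStep
    · constructor <;> simp [cfP, cfQ, a', b']
    · constructor <;> (simp [cfP, cfQ, a', b']; try ring)
    · intro n ih1 ih2
      constructor
      · show a' (n + 3) * cfP a' b' (n + 2) + b' (n + 2) * cfP a' b' (n + 1) = _
        rw [ih1.1, ih2.1]
        show a (n + 2) * cfQ a b (n + 1) + b (n + 1) * cfQ a b n = _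
        rfl
      · show a' (n + 3) * cfQ a' b' (n + 2) + b' (n + 2) * cfQ a' b' (n + 1) = _
        rw [ih1.2, ih2.2]
        show a (n + 2) * cfP a b (n + 1) + b (n + 1) * cfP a b n = _
        rfl
  -- p n eventually nonzero
  have hpne : ∀ᶠ n in Filter.atTop, cfP a b n ≠ 0 := by
    have := htend.eventually_ne h0
    filter_upwards [this] with n hn hp
    apply hn
    rw [hp]; simp
  obtain ⟨M1, hM1⟩ := Filter.eventually_atTop.1 hpne
  refine ⟨a', b', ⟨A.comp (Polynomial.X - Polynomial.C 1),
      B.comp (Polynomial.X - Polynomial.C 1), N + 1, fun n hn => ?_⟩,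
      fun n => ?_, ⟨M1 + 1, fun n hn => ?_⟩, ?_⟩
  · obtain ⟨m, rfl⟩ : ∃ m, n = m + 1 := ⟨n - 1, by omega⟩
    have hm : m ≥ N := by omega
    obtain ⟨hA, hB⟩ := hAB m hm
    constructor
    · show a m = _
      rw [hA, Polynomial.eval_comp]
      push_cast
      norm_num
    · show b m = _
      rw [hB, Polynomial.eval_comp]
      push_cast
      norm_num
  · match n with
    | 0 => simp [b']
    | n + 1 => exact hb n
  · obtain ⟨m, rfl⟩ : ∃ m, n = m + 1 := ⟨n - 1, by omega⟩
    rw [(key m).2]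
    exact hM1 m (by omega)
  · rw [← Filter.tendsto_add_atTop_iff_nat 1]
    have heq : ∀ n : ℕ,
        (((cfP a b n : ℝ) / (cfQ a b n : ℝ))⁻¹) =
        ((cfP a' b' (n + 1) : ℝ) / (cfQ a' b' (n + 1) : ℝ)) := by
      intro n
      rw [(key n).1, (key n).2, inv_div]
    exact (htend.inv₀ h0).congr heq

/-- `𝒞` is stable under the action of `GL₂(ℚ)` by Möbius transformations. -/
theorem CFType_moebius (u : ℝ) (hu : CFType u) (a b c d : ℚ)
    (hdet : a * d - b * c ≠ 0) (hden : (c : ℝ) * u + (d : ℝ) ≠ 0) :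
    CFType (((a : ℝ) * u + (b : ℝ)) / ((c : ℝ) * u + (d : ℝ))) := by
  by_cases hc : c = 0
  · subst hc
    have hd : d ≠ 0 := by
      intro h; apply hdet; rw [h]; ring
    have ha : a ≠ 0 := by
      intro h; apply hdet; rw [h]; ring
    have h1 := (hu.mul_rat (a / d) (div_ne_zero ha hd)).add_rat (b / d)
    convert h1 using 1
    have hd' : (d : ℝ) ≠ 0 := by exact_mod_cast hd
    push_cast
    field_simp
    rw [mul_zero, zero_add, mul_div_cancel_right₀ _ hd']
  · have hc' : (c : ℝ) ≠ 0 := by exact_mod_cast hc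
    have h1 : CFType ((c : ℝ) * u + (d : ℝ)) := (hu.mul_rat c hc).add_rat d
    have h2 : CFType ((c : ℝ) * u + (d : ℝ))⁻¹ := h1.inv hden
    have hr : (b * c - a * d) / c ≠ 0 := by
      apply div_ne_zero _ hc
      intro h; apply hdet
      linarith [h]
    have h3 := (h2.mul_rat _ hr).add_rat (a / c)
    convert h3 using 1
    push_cast
    field_simp
    have hX : (u * c + d : ℝ) * (u * c + d)⁻¹ = 1 :=
      mul_inv_cancel₀ (by rw [mul_comm]; exact hden)
    linear_combination (a : ℝ) * hX
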